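/- Let p be a McKay-quiver point. The following are equivalent: (i) there exist nonzero subspaces U, W ⊆ ℂ^Ĝ with ℂ^Ĝ = U ⊕ W such that U and W are each invariant under all the operators X_1, …, X_n and under the G-action; (ii) there exists a nonempty proper subset S ⊆ Ĝ such that both S and its complement Ĝ∖S are p-closed. -/

import Mathlib

/-- A McKay-quiver point. -/
def IsMcKayPt {G : Type*} [CommGroup G] {n : ℕ} (χ : Fin n → (G →* ℂˣ))
    (p : (G →* ℂˣ) → Fin n → ℂ) : Prop :=
  ∀ (ρ : G →* ℂˣ) (j j' : Fin n),
    p (ρ * χ j) j' * p ρ j = p (ρ * χ j') j * p ρ j'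

/-- `S ⊆ Ĝ` is `p`-closed. -/
def PClosed {G : Type*} [CommGroup G] {n : ℕ} (χ : Fin n → (G →* ℂˣ))
    (p : (G →* ℂˣ) → Fin n → ℂ) (S : Set (G →* ℂˣ)) : Prop :=
  ∀ ρ ∈ S, ∀ j : Fin n, p ρ j ≠ 0 → ρ * χ j ∈ S

/-- The operator `X_j` on `ℂ^Ĝ` associated to `p`. -/
noncomputable def Xop {G : Type*} [CommGroup G] {n : ℕ} (χ : Fin n → (G →* ℂˣ))
    (p : (G →* ℂˣ) → Fin n → ℂ) (j : Fin n) :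
    ((G →* ℂˣ) → ℂ) →ₗ[ℂ] ((G →* ℂˣ) → ℂ) where
  toFun v := fun σ => p (σ * (χ j)⁻¹) j * v (σ * (χ j)⁻¹)
  map_add' u v := by funext σ; simp [mul_add]
  map_smul' c v := by funext σ; simp [smul_eq_mul]; ring

/-- The `G`-action operator on `ℂ^Ĝ`: `g • e_ρ = ρ(g) • e_ρ`. -/
noncomputable def Dop {G : Type*} [CommGroup G] (g : G) :
    ((G →* ℂˣ) → ℂ) →ₗ[ℂ] ((G →* ℂˣ) → ℂ) where
  toFun v := fun ρ => ((ρ g : ℂˣ) : ℂ) * v ρ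
  map_add' u v := by funext ρ; simp [mul_add]
  map_smul' c v := by funext ρ; simp [smul_eq_mul]; ring



open Classical in
/-- orthogonality -/
lemma charsum {G : Type*} [CommGroup G] [Fintype G] (ρ σ : G →* ℂˣ) :
    ∑ g : G, ((σ g : ℂ) * (((ρ g)⁻¹ : ℂˣ) : ℂ)) =
      if σ = ρ then (Fintype.card G : ℂ) else 0 := by
  classical
  have hterm : ∀ g : G, (σ g : ℂ) * (((ρ g)⁻¹ : ℂˣ) : ℂ) = (((σ * ρ⁻¹) g : ℂˣ) : ℂ) := by
    intro g; simp
  simp only [hterm]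
  set ψ := σ * ρ⁻¹ with hψ
  by_cases h : σ = ρ
  · have : ψ = 1 := by rw [hψ, h]; exact mul_inv_cancel ρ
    simp [this, h]
  · have hψ1 : ψ ≠ 1 := fun hc => h (mul_inv_eq_one.mp hc)
    obtain ⟨a, ha⟩ : ∃ a : G, ψ a ≠ 1 := by
      by_contra hc
      push_neg at hc
      exact hψ1 (MonoidHom.ext fun g => hc g)
    have key : ((ψ a : ℂˣ) : ℂ) * ∑ g : G, ((ψ g : ℂˣ) : ℂ) = ∑ g : G, ((ψ g : ℂˣ) : ℂ) := by
      rw [Finset.mul_sum]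
      exact Fintype.sum_equiv (Equiv.mulLeft a) (fun x => ((ψ a : ℂˣ) : ℂ) * ((ψ x : ℂˣ) : ℂ)) (fun x => ((ψ x : ℂˣ) : ℂ)) (fun x => by simp [map_mul])
    have hne : ((ψ a : ℂˣ) : ℂ) ≠ 1 := by
      intro hc
      exact ha (Units.ext hc)
    have : (((ψ a : ℂˣ) : ℂ) - 1) * ∑ g : G, ((ψ g : ℂˣ) : ℂ) = 0 := by
      rw [sub_mul, one_mul, key, sub_self]
    rw [if_neg h]
    rcases mul_eq_zero.mp this with h1 | h2
    · exact absurd (by linear_combination h1) hne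
    · exact h2



open Classical in
/-- the standard basis vector `e_ρ`. -/
noncomputable def esing {G : Type*} [CommGroup G] (ρ : G →* ℂˣ) : (G →* ℂˣ) → ℂ :=
  Pi.single ρ 1

open Classical in
lemma esing_apply {G : Type*} [CommGroup G] (ρ σ : G →* ℂˣ) :
    esing ρ σ = if σ = ρ then (1:ℂ) else 0 := by
  simp [esing, Pi.single_apply]

lemma esing_ne_zero {G : Type*} [CommGroup G] (ρ : G →* ℂˣ) : esing ρ ≠ 0 := by
  intro hc
  have := congrFun hc ρ
  rw [esing_apply] at this
  simp at this

lemma Xop_apply {G : Type*} [CommGroup G] {n : ℕ} (χ : Fin n → (G →* ℂˣ))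
    (p : (G →* ℂˣ) → Fin n → ℂ) (j : Fin n) (v : (G →* ℂˣ) → ℂ) (σ : G →* ℂˣ) :
    Xop χ p j v σ = p (σ * (χ j)⁻¹) j * v (σ * (χ j)⁻¹) := rfl

lemma Dop_apply {G : Type*} [CommGroup G] (g : G) (v : (G →* ℂˣ) → ℂ) (ρ : G →* ℂˣ) :
    Dop g v ρ = ((ρ g : ℂˣ) : ℂ) * v ρ := rfl

open Classical in
lemma Xop_single {G : Type*} [CommGroup G] {n : ℕ} (χ : Fin n → (G →* ℂˣ))
    (p : (G →* ℂˣ) → Fin n → ℂ) (j : Fin n) (ρ : G →* ℂˣ) :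
    Xop χ p j (esing ρ) = p ρ j • esing (ρ * χ j) := by
  classical
  funext σ
  rw [Xop_apply]
  simp only [Pi.smul_apply, smul_eq_mul, esing_apply]
  by_cases h : σ * (χ j)⁻¹ = ρ
  · have h2 : σ = ρ * χ j := by rw [← h]; exact (inv_mul_cancel_right σ (χ j)).symm
    rw [if_pos h, if_pos h2, h]
  · have h2 : ¬ σ = ρ * χ j := fun he => h (by rw [he]; exact mul_inv_cancel_right ρ (χ j))
    rw [if_neg h, if_neg h2]; ring

open Classical in
/-- projection onto the ρ-coordinate stays in a Dop-invariant submodule -/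
lemma proj_mem {G : Type*} [CommGroup G] [Fintype G]
    (U : Submodule ℂ ((G →* ℂˣ) → ℂ))
    (hU : ∀ g : G, ∀ x ∈ U, Dop g x ∈ U) {v : (G →* ℂˣ) → ℂ} (hv : v ∈ U)
    (ρ : G →* ℂˣ) : Pi.single ρ (v ρ) ∈ U := by
  classical
  have hmem : ((Fintype.card G : ℂ)⁻¹ •
      ∑ g : G, (((ρ g)⁻¹ : ℂˣ) : ℂ) • Dop g v) ∈ U :=
    U.smul_mem _ (Submodule.sum_mem _ fun g _ => U.smul_mem _ (hU g v hv))
  have heq : Pi.single ρ (v ρ) =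
      (Fintype.card G : ℂ)⁻¹ • ∑ g : G, (((ρ g)⁻¹ : ℂˣ) : ℂ) • Dop g v := by
    funext σ
    have hsum : (∑ g : G, (((ρ g)⁻¹ : ℂˣ) : ℂ) • Dop g v) σ
        = (∑ g : G, (σ g : ℂ) * (((ρ g)⁻¹ : ℂˣ) : ℂ)) * v σ := by
      rw [Finset.sum_apply, Finset.sum_mul]
      refine Finset.sum_congr rfl fun g _ => ?_
      simp [Dop_apply]; ring
    rw [Pi.smul_apply, hsum, charsum, Pi.single_apply]
    have hcard : (Fintype.card G : ℂ) ≠ 0 := by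
      exact_mod_cast Fintype.card_ne_zero
    by_cases h : σ = ρ
    · rw [if_pos h, if_pos h, h]
      simp only [smul_eq_mul]
      field_simp
    · rw [if_neg h, if_neg h]
      simp
  rw [heq]; exact hmem

lemma single_one_mem {G : Type*} [CommGroup G] [Fintype G]
    (U : Submodule ℂ ((G →* ℂˣ) → ℂ))
    (hU : ∀ g : G, ∀ x ∈ U, Dop g x ∈ U) {v : (G →* ℂˣ) → ℂ} (hv : v ∈ U)
    {ρ : G →* ℂˣ} (hρ : v ρ ≠ 0) : esing ρ ∈ U := by
  classical
  have h1 : Pi.single ρ (v ρ) ∈ U := proj_mem U hU hv ρ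
  have h2 : esing ρ = (v ρ)⁻¹ • (Pi.single ρ (v ρ) : (G →* ℂˣ) → ℂ) := by
    funext σ
    rw [esing_apply]
    simp only [Pi.smul_apply, Pi.single_apply, smul_eq_mul]
    by_cases h : σ = ρ
    · simp [h, inv_mul_cancel₀ hρ]
    · simp [h]
  rw [h2]; exact U.smul_mem _ h1

open Classical in
noncomputable def suppMod {G : Type*} [CommGroup G] (S : Set (G →* ℂˣ)) :
    Submodule ℂ ((G →* ℂˣ) → ℂ) where
  carrier := {v | ∀ σ, σ ∉ S → v σ = 0}
  add_mem' := by intro a b ha hb σ hσ; simp [ha σ hσ, hb σ hσ]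
  zero_mem' := by intro σ hσ; rfl
  smul_mem' := by intro c v hv σ hσ; simp [hv σ hσ]

lemma suppMod_Xop {G : Type*} [CommGroup G] {n : ℕ} (χ : Fin n → (G →* ℂˣ))
    (p : (G →* ℂˣ) → Fin n → ℂ) (S : Set (G →* ℂˣ)) (hS : PClosed χ p S) :
    ∀ j : Fin n, ∀ v ∈ suppMod S, Xop χ p j v ∈ suppMod S := by
  intro j v hv σ hσ
  rw [Xop_apply]
  by_cases h : σ * (χ j)⁻¹ ∈ S
  · by_cases hp0 : p (σ * (χ j)⁻¹) j = 0
    · rw [hp0, zero_mul]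
    · exfalso
      apply hσ
      have hmem := hS _ h j hp0
      have heq : σ * (χ j)⁻¹ * χ j = σ := inv_mul_cancel_right σ (χ j)
      rwa [heq] at hmem
  · rw [hv _ h, mul_zero]

lemma suppMod_Dop {G : Type*} [CommGroup G] (S : Set (G →* ℂˣ)) :
    ∀ g : G, ∀ v ∈ suppMod S, Dop g v ∈ suppMod S := by
  intro g v hv σ hσ
  rw [Dop_apply, hv σ hσ, mul_zero]

lemma suppMod_ne_bot {G : Type*} [CommGroup G] {S : Set (G →* ℂˣ)} {ρ : G →* ℂˣ}
    (hρ : ρ ∈ S) : suppMod S ≠ ⊥ := by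
  classical
  intro hc
  have hmem : esing ρ ∈ suppMod S := by
    intro σ hσ
    have hne : σ ≠ ρ := fun he => hσ (he ▸ hρ)
    rw [esing_apply, if_neg hne]
  rw [hc, Submodule.mem_bot] at hmem
  have := congrFun hmem ρ
  rw [esing_apply, if_pos rfl] at this
  simp at this

/-- `ℂ^Ĝ` admits a nontrivial direct sum decomposition into subspaces invariant under
all the `X_j` and the `G`-action iff there is a nonempty proper subset `S ⊆ Ĝ` such
that both `S` and its complement are `p`-closed. -/
theorem stmt11 {G : Type*} [CommGroup G] [Fintype G] {n : ℕ} (hn : 1 ≤ n)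
    (χ : Fin n → (G →* ℂˣ))
    (p : (G →* ℂˣ) → Fin n → ℂ) (hp : IsMcKayPt χ p) :
    (∃ U W : Submodule ℂ ((G →* ℂˣ) → ℂ),
        U ≠ ⊥ ∧ W ≠ ⊥ ∧ IsCompl U W ∧
        (∀ j : Fin n, ∀ x ∈ U, Xop χ p j x ∈ U) ∧
        (∀ g : G, ∀ x ∈ U, Dop g x ∈ U) ∧
        (∀ j : Fin n, ∀ x ∈ W, Xop χ p j x ∈ W) ∧
        (∀ g : G, ∀ x ∈ W, Dop g x ∈ W)) ↔
    (∃ S : Set (G →* ℂˣ), S.Nonempty ∧ S ≠ Set.univ ∧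
        PClosed χ p S ∧ PClosed χ p Sᶜ) := by
  classical
  constructor
  · rintro ⟨U, W, hU0, hW0, hcompl, hUX, hUD, hWX, hWD⟩
    set S : Set (G →* ℂˣ) := {ρ | esing ρ ∈ U} with hSdef
    have hnotboth : ∀ ρ : G →* ℂˣ,
        ¬ (esing ρ ∈ U ∧
           esing ρ ∈ W) := by
      rintro ρ ⟨h1, h2⟩
      exact esing_ne_zero ρ (Submodule.disjoint_def.mp hcompl.disjoint _ h1 h2)
    have hdich : ∀ ρ : G →* ℂˣ,
        esing ρ ∈ U ∨
        esing ρ ∈ W := by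
      intro ρ
      have hmem : esing ρ ∈ U ⊔ W := by
        rw [hcompl.sup_eq_top]; trivial
      obtain ⟨u, hu, w, hw, huw⟩ := Submodule.mem_sup.mp hmem
      have h1 : u ρ + w ρ = 1 := by
        have := congrFun huw ρ
        rw [Pi.add_apply, esing_apply] at this
        simpa using this
      by_cases hu0 : u ρ = 0
      · have hw0 : w ρ ≠ 0 := by
          rw [hu0, zero_add] at h1; rw [h1]; exact one_ne_zero
        exact Or.inr (single_one_mem W hWD hw hw0)
      · exact Or.inl (single_one_mem U hUD hu hu0)
    have hcompl_mem : ∀ ρ : G →* ℂˣ, ρ ∉ S →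
        esing ρ ∈ W := by
      intro ρ hρ
      rcases hdich ρ with h | h
      · exact absurd h hρ
      · exact h
    refine ⟨S, ?_, ?_, ?_, ?_⟩
    · obtain ⟨v, hv, hv0⟩ := Submodule.exists_mem_ne_zero_of_ne_bot hU0
      obtain ⟨ρ, hρ⟩ := Function.ne_iff.mp hv0
      exact ⟨ρ, single_one_mem U hUD hv (by simpa using hρ)⟩
    · intro hEq
      obtain ⟨v, hv, hv0⟩ := Submodule.exists_mem_ne_zero_of_ne_bot hW0
      obtain ⟨ρ, hρ⟩ := Function.ne_iff.mp hv0
      have hW1 : esing ρ ∈ W :=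
        single_one_mem W hWD hv (by simpa using hρ)
      have hU1 : ρ ∈ S := hEq ▸ Set.mem_univ ρ
      exact hnotboth ρ ⟨hU1, hW1⟩
    · intro ρ hρ j hpj
      have h1 := hUX j _ hρ
      rw [Xop_single] at h1
      have h2 := U.smul_mem (p ρ j)⁻¹ h1
      rwa [inv_smul_smul₀ hpj] at h2
    · intro ρ hρ j hpj
      have hWρ := hcompl_mem ρ hρ
      have h1 := hWX j _ hWρ
      rw [Xop_single] at h1
      have h2 := W.smul_mem (p ρ j)⁻¹ h1
      rw [inv_smul_smul₀ hpj] at h2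
      intro hc
      exact hnotboth _ ⟨hc, h2⟩
  · rintro ⟨S, ⟨ρ0, hρ0⟩, hSne, hS, hSc⟩
    obtain ⟨ρ1, hρ1⟩ : ∃ ρ, ρ ∉ S := by
      by_contra hc
      push_neg at hc
      exact hSne (Set.eq_univ_of_forall hc)
    refine ⟨suppMod S, suppMod Sᶜ, suppMod_ne_bot hρ0, suppMod_ne_bot hρ1, ?_,
      suppMod_Xop χ p S hS, suppMod_Dop S, suppMod_Xop χ p Sᶜ hSc, suppMod_Dop Sᶜ⟩
    constructor
    · rw [Submodule.disjoint_def]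
      intro v h1 h2
      funext σ
      by_cases h : σ ∈ S
      · exact h2 σ (by simpa using h)
      · exact h1 σ h
    · rw [codisjoint_iff, Submodule.eq_top_iff']
      intro v
      refine Submodule.mem_sup.mpr ⟨S.indicator v, ?_, Sᶜ.indicator v, ?_, ?_⟩
      · intro σ hσ
        exact Set.indicator_of_notMem hσ v
      · intro σ hσ
        exact Set.indicator_of_notMem hσ v
      · funext σ
        by_cases h : σ ∈ S
        · simp [Set.indicator_of_mem h, Set.indicator_of_notMem (by simpa using h : σ ∉ Sᶜ)]
        · simp [Set.indicator_of_notMem h, Set.indicator_of_mem (by simpa using h : σ ∈ Sᶜ)]
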